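/- Let q = 3^d with d even and b ∈ F_q with Tr(b) = 0. Then the elliptic curve E: y^2 = x^3 - x + b over F_q satisfies #E(F_q) = q + 1 - (-1)^(d/2)·2·3^(d/2). -/

import Mathlib

open Finset

section Helpers
variable {G : Type*} [AddCommGroup G] [Fintype G] [DecidableEq G]

omit [DecidableEq G] in
lemma fiber_card_eq {H : Type*} [AddCommGroup H] [DecidableEq H] (f : G →+ H) (x0 : G) :
    (univ.filter fun z : G => f z = f x0).card = (univ.filter fun z : G => f z = 0).card := by
  apply Finset.card_nbij' (i := fun z => z - x0) (j := fun z => z + x0)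
  · intro a ha
    simp only [mem_coe, mem_filter, mem_univ, true_and] at ha ⊢
    simp [map_sub, ha]
  · intro a ha
    simp only [mem_coe, mem_filter, mem_univ, true_and] at ha ⊢
    simp [map_add, ha]
  · intro a _; simp
  · intro a _; simp

lemma image_card_mul_ker_card (f : G →+ G) :
    (univ.image f).card * (univ.filter fun z : G => f z = 0).card = Fintype.card G := by
  rw [← card_univ, Finset.card_eq_sum_card_image f univ]
  rw [Finset.sum_congr rfl (fun t ht => ?_), sum_const, smul_eq_mul]
  obtain ⟨x0, -, hx0⟩ := Finset.mem_image.mp ht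
  rw [← hx0]
  exact fiber_card_eq f x0

lemma card_roots_le {F : Type*} [Field F] [Fintype F] [DecidableEq F] (p : Polynomial F)
    (hp : p ≠ 0) : (univ.filter fun z : F => p.eval z = 0).card ≤ p.natDegree := by
  calc (univ.filter fun z : F => p.eval z = 0).card
      ≤ p.roots.toFinset.card := by
        apply Finset.card_le_card
        intro z hz
        simp only [mem_filter, mem_univ, true_and] at hz
        simp [Multiset.mem_toFinset, Polynomial.mem_roots, hp, hz, Polynomial.IsRoot]
    _ ≤ Multiset.card p.roots := p.roots.toFinset_card_le
    _ ≤ p.natDegree := p.card_roots'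

lemma par3 (e : ℕ) : (3 ^ e + 1) / 2 % 2 = (e + 1) % 2 := by
  induction e with
  | zero => rfl
  | succ n ih =>
    have hx : 3 ^ n % 2 = 1 := Nat.pow_mod 3 n 2 ▸ by simp [Nat.one_pow]
    have h3 : 3 ^ (n + 1) = 3 * 3 ^ n := by rw [pow_succ]; ring
    omega

lemma half_sq {q : ℕ} (hq : Odd q) : q * q / 2 = (q - 1) * ((q + 1) / 2) := by
  obtain ⟨m, rfl⟩ := hq
  have h1 : (2 * m + 1) * (2 * m + 1) = 2 * (2 * (m * m) + 2 * m) + 1 := by ring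
  have h2 : (2 * m + 1 - 1) * ((2 * m + 1 + 1) / 2) = 2 * (m * m) + 2 * m := by
    have : (2 * m + 1 + 1) / 2 = m + 1 := by omega
    rw [this]
    have : 2 * m + 1 - 1 = 2 * m := by omega
    rw [this]; ring
  rw [h1, h2]
  omega

lemma zmod3_neg_self : ∀ a : ZMod 3, a = -a → a = 0 := by decide

end Helpers

section Main

variable (F : Type) [Field F] [Fintype F] [Algebra (ZMod 3) F]

theorem main_count (e : ℕ) (he : e ≠ 0) (hF : Fintype.card F = 3 ^ (2 * e)) (b : F)
    (hb : Algebra.trace (ZMod 3) F b = 0) :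
    (Nat.card {p : F × F // p.2 ^ 2 = p.1 ^ 3 - p.1 + b} : ℤ) =
      3 ^ (2 * e) - (-1) ^ e * 2 * 3 ^ e := by
  classical
  haveI hch : CharP F 3 := charP_of_injective_algebraMap (algebraMap (ZMod 3) F).injective 3
  haveI hp3 : Fact (Nat.Prime 3) := ⟨by norm_num⟩
  set q : ℕ := 3 ^ e with hq
  have hq3 : 3 ≤ q := by
    calc 3 = 3 ^ 1 := by norm_num
    _ ≤ 3 ^ e := Nat.pow_le_pow_right (by norm_num) (by omega)
  have hqodd : Odd q := Odd.pow ⟨1, by norm_num⟩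
  have hqq : Fintype.card F = q * q := by rw [hF, hq, two_mul, pow_add]
  have hzq : ∀ z : F, z ^ (q * q) = z := by
    intro z; rw [← hqq]; exact FiniteField.pow_card z
  have frobq : ∀ x y : F, (x + y) ^ q = x ^ q + y ^ q := by
    intro x y; rw [hq]; exact add_pow_char_pow x y 3 e
  -- trace is invariant under cubing
  have tr_frob : ∀ x : F, Algebra.trace (ZMod 3) F (x ^ 3) = Algebra.trace (ZMod 3) F x := by
    have hcom : ∀ r : ZMod 3, frobenius F 3 (algebraMap (ZMod 3) F r) = algebraMap (ZMod 3) F r := by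
      intro r
      rw [frobenius_def, ← map_pow, ZMod.pow_card]
    have hbij : Function.Bijective (frobenius F 3) :=
      Finite.injective_iff_bijective.mp (frobenius_inj F 3)
    let φ : F ≃ₐ[ZMod 3] F := AlgEquiv.ofBijective ⟨frobenius F 3, hcom⟩ hbij
    intro x
    have h := Algebra.trace_eq_of_algEquiv φ x
    have hφ : φ x = x ^ 3 := rfl
    rw [hφ] at h
    exact h
  have tr_pow : ∀ (n : ℕ) (x : F),
      Algebra.trace (ZMod 3) F (x ^ 3 ^ n) = Algebra.trace (ZMod 3) F x := by
    intro n
    induction n with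
    | zero => simp
    | succ n ih =>
      intro x
      rw [pow_succ, pow_mul, tr_frob]
      exact ih x
  have tr_q : ∀ x : F, Algebra.trace (ZMod 3) F (x ^ q) = Algebra.trace (ZMod 3) F x := by
    intro x; rw [hq]; exact tr_pow e x
  -- the Artin-Schreier map and trace-zero set
  have hne0 : ∀ x : F, x + 1 = 0 → x = -1 := fun x h => by linear_combination h
  set P : F →+ F := AddMonoidHom.mk' (fun x => x ^ 3 - x)
    (fun a b => by beta_reduce; rw [add_pow_char a b 3]; ring) with hP
  set T : F →+ F := AddMonoidHom.mk' (fun z => z + z ^ q)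
    (fun a b => by beta_reduce; rw [frobq a b]; ring) with hT
  set V : Finset F := univ.filter fun z : F => Algebra.trace (ZMod 3) F z = 0 with hV
  set K : Finset F := univ.filter fun k : F => k ^ q = k with hK
  set W : Finset F := univ.filter fun z : F => T z = 0 with hW
  -- cardinality of V
  have tr_surj : ∀ a : ZMod 3, ∃ x : F, Algebra.trace (ZMod 3) F x = a := by
    have h0 : Algebra.trace (ZMod 3) F ≠ 0 := Algebra.trace_ne_zero (ZMod 3) F
    have hex : ∃ s : F, Algebra.trace (ZMod 3) F s ≠ 0 := by
      by_contra h
      push_neg at h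
      exact h0 (LinearMap.ext fun s => by simpa using h s)
    obtain ⟨s, hs⟩ := hex
    intro a
    refine ⟨(a * (Algebra.trace (ZMod 3) F s)⁻¹) • s, ?_⟩
    rw [map_smul, smul_eq_mul, mul_assoc, inv_mul_cancel₀ hs, mul_one]
  have cardV : 3 * V.card = 3 ^ (2 * e) := by
    have hmaps : ∀ x ∈ (univ : Finset F),
        Algebra.trace (ZMod 3) F x ∈ (univ : Finset (ZMod 3)) := fun x _ => mem_univ _
    have h1 : Fintype.card F =
        ∑ a : ZMod 3, (univ.filter fun x : F => Algebra.trace (ZMod 3) F x = a).card := by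
      rw [← card_univ]
      exact Finset.card_eq_sum_card_fiberwise hmaps
    have h2 : ∀ a : ZMod 3,
        (univ.filter fun x : F => Algebra.trace (ZMod 3) F x = a).card = V.card := by
      intro a
      obtain ⟨x0, hx0⟩ := tr_surj a
      have h3 := fiber_card_eq ((Algebra.trace (ZMod 3) F).toAddMonoidHom) x0
      simp only [LinearMap.toAddMonoidHom_coe] at h3
      rw [hV, ← hx0]
      exact h3
    have h4 : Fintype.card F = 3 * V.card := by
      rw [h1, Finset.sum_congr rfl (fun a _ => h2 a), sum_const, card_univ, ZMod.card,
        smul_eq_mul]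
    rw [← h4, hF]
  -- kernel of P
  have hPapp : ∀ x : F, P x = x ^ 3 - x := fun x => rfl
  have hTapp : ∀ z : F, T z = z + z ^ q := fun z => rfl
  have hne : (1 : F) ≠ -1 := by
    intro h
    have h2 : ((2 : ℕ) : F) = 0 := by push_cast; linear_combination h
    rw [CharP.cast_eq_zero_iff F 3 2] at h2
    omega
  have kerP : (univ.filter fun z : F => P z = 0).card = 3 := by
    have hset : (univ.filter fun z : F => P z = 0) = {0, 1, -1} := by
      ext x
      simp only [mem_filter, mem_univ, true_and, mem_insert, mem_singleton]
      rw [hPapp]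
      constructor
      · intro h
        have hx : x * (x - 1) * (x + 1) = 0 := by linear_combination h
        rcases mul_eq_zero.mp hx with h1 | h1
        · rcases mul_eq_zero.mp h1 with h2 | h2
          · exact Or.inl h2
          · exact Or.inr (Or.inl (sub_eq_zero.mp h2))
        · exact Or.inr (Or.inr (hne0 x h1))
      · rintro (rfl | rfl | rfl) <;> ring
    rw [hset]
    have h0m : (0 : F) ≠ -1 := by
      intro h; exact one_ne_zero (α := F) (by linear_combination h)
    rw [card_insert_of_notMem (by simp [h0m]),
      card_insert_of_notMem (by simpa using hne), card_singleton]
  -- image of P is V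
  have imP_sub : univ.image P ⊆ V := by
    intro t ht
    obtain ⟨x, -, rfl⟩ := Finset.mem_image.mp ht
    rw [hV, mem_filter]
    refine ⟨mem_univ _, ?_⟩
    rw [hPapp, map_sub, tr_frob, sub_self]
  have imP : univ.image P = V := by
    apply Finset.eq_of_subset_of_card_le imP_sub
    have h1 := image_card_mul_ker_card P
    rw [kerP, hF] at h1
    omega
  -- b is in the image of P
  have hbc : ∃ c : F, P c = b := by
    have : b ∈ V := by rw [hV]; simp [hb]
    rw [← imP] at this
    obtain ⟨c, -, hc⟩ := Finset.mem_image.mp this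
    exact ⟨c, hc⟩
  obtain ⟨c, hc⟩ := hbc
  -- cardinalities of W and K, image of T is K
  have imT_sub_K : univ.image T ⊆ K := by
    intro s hs
    obtain ⟨z, -, rfl⟩ := Finset.mem_image.mp hs
    rw [hK, mem_filter]
    refine ⟨mem_univ _, ?_⟩
    rw [hTapp, frobq, ← pow_mul, hzq]
    ring
  have cardW_le : W.card ≤ q := by
    have hpdeg : (Polynomial.X ^ q + Polynomial.X : Polynomial F).natDegree = q := by
      rw [Polynomial.natDegree_add_eq_left_of_natDegree_lt, Polynomial.natDegree_X_pow]
      rw [Polynomial.natDegree_X_pow, Polynomial.natDegree_X]; omega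
    have hp0 : (Polynomial.X ^ q + Polynomial.X : Polynomial F) ≠ 0 := by
      intro h
      rw [h, Polynomial.natDegree_zero] at hpdeg
      omega
    have hroot := card_roots_le _ hp0
    rw [hpdeg] at hroot
    refine le_trans (card_le_card ?_) hroot
    intro z hz
    rw [hW, mem_filter] at hz
    rw [mem_filter]
    refine ⟨mem_univ _, ?_⟩
    rw [Polynomial.eval_add, Polynomial.eval_pow, Polynomial.eval_X]
    have h2 := hz.2
    rw [hTapp] at h2
    linear_combination h2
  have cardK_le : K.card ≤ q := by
    have hpdeg : (Polynomial.X ^ q - Polynomial.X : Polynomial F).natDegree = q := by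
      rw [Polynomial.natDegree_sub_eq_left_of_natDegree_lt, Polynomial.natDegree_X_pow]
      rw [Polynomial.natDegree_X_pow, Polynomial.natDegree_X]; omega
    have hp0 : (Polynomial.X ^ q - Polynomial.X : Polynomial F) ≠ 0 := by
      intro h
      rw [h, Polynomial.natDegree_zero] at hpdeg
      omega
    have hroot := card_roots_le _ hp0
    rw [hpdeg] at hroot
    refine le_trans (card_le_card ?_) hroot
    intro z hz
    rw [hK, mem_filter] at hz
    rw [mem_filter]
    refine ⟨mem_univ _, ?_⟩
    rw [Polynomial.eval_sub, Polynomial.eval_pow, Polynomial.eval_X]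
    rw [hz.2, sub_self]
  have imT_mul : (univ.image T).card * W.card = q * q := by
    rw [image_card_mul_ker_card T, hqq]
  have cardW : W.card = q := by
    have h1 : (univ.image T).card ≤ q := le_trans (card_le_card imT_sub_K) cardK_le
    have h2 : q * q ≤ q * W.card := by
      calc q * q = (univ.image T).card * W.card := imT_mul.symm
      _ ≤ q * W.card := Nat.mul_le_mul_right _ h1
    have := Nat.le_of_mul_le_mul_left h2 (by omega)
    omega
  have imT : univ.image T = K := by
    apply Finset.eq_of_subset_of_card_le imT_sub_K
    have h4 : (univ.image T).card = q := by
      have h5 : (univ.image T).card * q = q * q := by rw [← imT_mul, cardW]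
      exact Nat.eq_of_mul_eq_mul_right (by omega) h5
    omega
  have W_sub_V : W ⊆ V := by
    intro z hz
    rw [hW, mem_filter] at hz
    have hzz : z ^ q = -z := by
      have h2 := hz.2
      rw [hTapp] at h2
      linear_combination h2
    have h1 : Algebra.trace (ZMod 3) F z = - Algebra.trace (ZMod 3) F z := by
      conv_lhs => rw [← tr_q z, hzz, map_neg]
    rw [hV, mem_filter]
    refine ⟨mem_univ _, ?_⟩
    exact zmod3_neg_self _ h1
  -- quadratic character facts
  have hring : ringChar F = 3 := by
    have := ringChar.eq F 3; omega
  have hF2 : ringChar F ≠ 2 := by omega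
  have cnt : ∀ a : F, (Fintype.card {y : F // y ^ 2 = a} : ℤ) = quadraticChar F a + 1 := by
    intro a
    have h := quadraticChar_card_sqrts hF2 a
    rw [← h, Set.toFinset_card]
    norm_cast
  have hhalf : q * q / 2 = (q - 1) * ((q + 1) / 2) := half_sq hqodd
  have hK1 : ∀ k ∈ K, k ≠ 0 → (quadraticChar F k : ℤ) = 1 := by
    intro k hk hk0
    rw [hK, mem_filter] at hk
    have hk1 : k ^ (q - 1) = 1 := by
      have h1 : k ^ (q - 1) * k = 1 * k := by
        rw [one_mul, ← pow_succ]
        have hsq : q - 1 + 1 = q := by omega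
        rw [hsq, hk.2]
      exact mul_right_cancel₀ hk0 h1
    have h2 : k ^ (Fintype.card F / 2) = 1 := by
      rw [hqq, hhalf, pow_mul, hk1, one_pow]
    rw [quadraticChar_eq_pow_of_char_ne_two hF2 hk0, if_pos h2]
  have hW1 : ∀ z ∈ W, z ≠ 0 → (quadraticChar F z : ℤ) = (-1) ^ (e + 1) := by
    intro z hz hz0
    rw [hW, mem_filter] at hz
    have hzz : z ^ q = -z := by
      have h2 := hz.2
      rw [hTapp] at h2
      linear_combination h2
    have hz1 : z ^ (q - 1) = -1 := by
      have h1 : z ^ (q - 1) * z = -1 * z := by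
        rw [← pow_succ]
        have hsq : q - 1 + 1 = q := by omega
        rw [hsq, hzz]; ring
      exact mul_right_cancel₀ hz0 h1
    have h2 : z ^ (Fintype.card F / 2) = (-1 : F) ^ ((q + 1) / 2) := by
      rw [hqq, hhalf, pow_mul, hz1]
    have hpar := par3 e
    rw [← hq] at hpar
    rcases Nat.even_or_odd (e + 1) with hev | hod
    · have hev2 : Even ((q + 1) / 2) := by
        rw [Nat.even_iff] at hev ⊢
        omega
      have h3 : z ^ (Fintype.card F / 2) = 1 := by rw [h2, hev2.neg_one_pow]
      rw [quadraticChar_eq_pow_of_char_ne_two hF2 hz0, if_pos h3, hev.neg_one_pow]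
    · have hod2 : Odd ((q + 1) / 2) := by
        rw [Nat.odd_iff] at hod ⊢
        omega
      have h3 : z ^ (Fintype.card F / 2) = -1 := by rw [h2, hod2.neg_one_pow]
      have h4 : z ^ (Fintype.card F / 2) ≠ 1 := by
        rw [h3]; exact fun h => hne h.symm
      rw [quadraticChar_eq_pow_of_char_ne_two hF2 hz0, if_neg h4, hod.neg_one_pow]
  -- the fiberwise sums D
  set D : F → ℤ := fun s => ∑ z ∈ univ.filter fun z : F => T z = s, (quadraticChar F z : ℤ)
    with hD
  have hzeroK : (0 : F) ∈ K := by rw [hK]; simp [zero_pow (by omega : q ≠ 0)]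
  have hzeroW : (0 : F) ∈ W := by rw [hW]; simp
  have hD0 : D 0 = ((q : ℤ) - 1) * (-1) ^ (e + 1) := by
    have hWf : (univ.filter fun z : F => T z = 0) = W := hW.symm
    rw [hD]
    simp only [hWf]
    rw [← Finset.sum_erase_add W _ hzeroW, quadraticChar_zero]
    push_cast
    rw [add_zero]
    rw [Finset.sum_congr rfl
      (fun z hz => hW1 z (mem_of_mem_erase hz) (ne_of_mem_erase hz))]
    rw [sum_const, card_erase_of_mem hzeroW, cardW, nsmul_eq_mul]
    rw [Nat.cast_sub (by omega : 1 ≤ q)]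
    push_cast
    ring
  have cardK : K.card = q := by
    have h5 := imT_mul
    rw [cardW] at h5
    have h6 : (univ.image T).card = q := Nat.eq_of_mul_eq_mul_right (by omega) h5
    rw [← imT, h6]
  have hDsum : ∑ s ∈ K, D s = 0 := by
    have hmaps : ∀ z ∈ (univ : Finset F), T z ∈ K := by
      intro z _
      exact imT ▸ mem_image_of_mem T (mem_univ z)
    have h1 := Finset.sum_fiberwise_of_maps_to hmaps (fun z => (quadraticChar F z : ℤ))
    rw [hD]
    calc ∑ s ∈ K, ∑ z ∈ univ.filter fun z : F => T z = s, (quadraticChar F z : ℤ)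
        = ∑ z : F, (quadraticChar F z : ℤ) := h1
    _ = 0 := by exact_mod_cast congrArg (Int.cast : ℤ → ℤ) (quadraticChar_sum_zero hF2)
  have hDeq : ∀ s ∈ K, s ≠ 0 → ∀ s' ∈ K, s' ≠ 0 → D s = D s' := by
    intro s hs hs0 s' hs' hs0'
    rw [hK, mem_filter] at hs hs'
    set k : F := s' * s⁻¹ with hk
    have hk0 : k ≠ 0 := mul_ne_zero hs0' (inv_ne_zero hs0)
    have hkq : k ^ q = k := by
      rw [hk, mul_pow, hs'.2, inv_pow, hs.2]
    have hkK : k ∈ K := by rw [hK, mem_filter]; exact ⟨mem_univ _, hkq⟩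
    have hks : k * s = s' := by rw [hk]; field_simp
    have hks' : k⁻¹ * s' = s := by rw [← hks]; field_simp
    rw [hD]
    refine Finset.sum_nbij' (fun z => k * z) (fun z => k⁻¹ * z) ?_ ?_ ?_ ?_ ?_
    · intro a ha
      rw [mem_filter] at ha ⊢
      refine ⟨mem_univ _, ?_⟩
      have h6 : a + a ^ q = s := (hTapp a).symm.trans ha.2
      rw [hTapp, mul_pow, hkq, ← hks]
      linear_combination k * h6
    · intro a ha
      rw [mem_filter] at ha ⊢
      refine ⟨mem_univ _, ?_⟩
      have hkq' : (k⁻¹) ^ q = k⁻¹ := by rw [inv_pow, hkq]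
      have h6 : a + a ^ q = s' := (hTapp a).symm.trans ha.2
      rw [hTapp, mul_pow, hkq', ← hks']
      linear_combination k⁻¹ * h6
    · intro a _
      field_simp
    · intro a _
      field_simp
    · intro a _
      rw [map_mul]
      have h7 : (quadraticChar F k : ℤ) = 1 := hK1 k hkK hk0
      push_cast
      rw [h7, one_mul]
  have hDconst : ∀ s ∈ K, s ≠ 0 → D s = -(-1) ^ (e + 1) := by
    intro s hs hs0
    have hconst : ∀ s' ∈ K.erase 0, D s' = D s := fun s' hs' =>
      hDeq s' (mem_of_mem_erase hs') (ne_of_mem_erase hs') s hs hs0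
    have hcard : (K.erase 0).card = q - 1 := by rw [card_erase_of_mem hzeroK, cardK]
    have hsum : ∑ s' ∈ K, D s' = D 0 + ((q : ℤ) - 1) * D s := by
      rw [← Finset.add_sum_erase K D hzeroK]
      congr 1
      rw [Finset.sum_congr rfl hconst, sum_const, hcard, nsmul_eq_mul,
        Nat.cast_sub (by omega : 1 ≤ q)]
      push_cast
      ring
    rw [hDsum, hD0] at hsum
    have hq1 : (3 : ℤ) ≤ (q : ℤ) := by exact_mod_cast hq3
    have key : ((q : ℤ) - 1) * ((-1) ^ (e + 1) + D s) = 0 := by linear_combination -hsum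
    rcases mul_eq_zero.mp key with h | h
    · omega
    · linarith
  -- the sum over V via fibers of T
  set TV : Finset F := V.image T with hTV
  have TV_sub_K : TV ⊆ K := by
    intro s hs
    exact imT ▸ (Finset.image_subset_image (Finset.subset_univ V) hs)
  have fiber_in_V : ∀ s ∈ TV, ∀ z : F, T z = s → z ∈ V := by
    intro s hs z hz
    rw [hTV] at hs
    obtain ⟨z0, hz0V, hz0⟩ := Finset.mem_image.mp hs
    have hWmem : z - z0 ∈ W := by
      rw [hW, mem_filter]
      refine ⟨mem_univ _, ?_⟩
      rw [map_sub, hz, hz0, sub_self]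
    have h1 : Algebra.trace (ZMod 3) F (z - z0) = 0 := by
      have h := W_sub_V hWmem
      rw [hV, mem_filter] at h
      exact h.2
    have h2 : Algebra.trace (ZMod 3) F z0 = 0 := by
      rw [hV, mem_filter] at hz0V
      exact hz0V.2
    rw [hV, mem_filter]
    refine ⟨mem_univ _, ?_⟩
    have h3 := map_sub (Algebra.trace (ZMod 3) F) z z0
    linear_combination -h3 + h1 + h2
  have hzeroTV : (0 : F) ∈ TV := by
    rw [hTV]
    apply Finset.mem_image.mpr
    refine ⟨0, ?_, map_zero T⟩
    rw [hV, mem_filter]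
    exact ⟨mem_univ _, map_zero _⟩
  have cardTV : TV.card = 3 ^ (e - 1) := by
    have hfib_eq : ∀ s ∈ TV, (V.filter fun z : F => T z = s).card = q := by
      intro s hs
      have hVf : (V.filter fun z : F => T z = s) = univ.filter fun z : F => T z = s := by
        ext z
        simp only [mem_filter, mem_univ, true_and]
        exact ⟨fun h => h.2, fun h => ⟨fiber_in_V s hs z h, h⟩⟩
      rw [hVf]
      rw [hTV] at hs
      obtain ⟨z0, -, hz0⟩ := Finset.mem_image.mp hs
      rw [← hz0, fiber_card_eq T z0, ← hW, cardW]
    have hVTV : V.card = TV.card * q := by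
      rw [Finset.card_eq_sum_card_fiberwise
        (fun z hz => (hTV ▸ mem_image_of_mem T hz : T z ∈ TV))]
      rw [Finset.sum_congr rfl hfib_eq, sum_const, smul_eq_mul]
    have hVcard : V.card = 3 ^ (2 * e - 1) := by
      have h8 : 3 ^ (2 * e) = 3 * 3 ^ (2 * e - 1) := by
        rw [← pow_succ']
        congr 1
        omega
      omega
    have h9 : 3 ^ (2 * e - 1) = 3 ^ (e - 1) * q := by
      rw [hq, ← pow_add]
      congr 1
      omega
    rw [hVcard, h9] at hVTV
    exact (Nat.eq_of_mul_eq_mul_right (by omega) hVTV.symm)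
  have hC : ∑ t ∈ V, (quadraticChar F t : ℤ) = (-1) ^ (e + 1) * 2 * 3 ^ (e - 1) := by
    have hmapsV : ∀ z ∈ V, T z ∈ TV := fun z hz => hTV ▸ mem_image_of_mem T hz
    have h1 := Finset.sum_fiberwise_of_maps_to hmapsV (fun z => (quadraticChar F z : ℤ))
    have h2 : ∀ s ∈ TV, (∑ z ∈ V.filter fun z : F => T z = s, (quadraticChar F z : ℤ)) = D s := by
      intro s hs
      rw [hD]
      congr 1
      ext z
      simp only [mem_filter, mem_univ, true_and]
      exact ⟨fun h => h.2, fun h => ⟨fiber_in_V s hs z h, h⟩⟩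
    rw [← h1, Finset.sum_congr rfl h2]
    rw [← Finset.add_sum_erase TV D hzeroTV]
    have h3 : ∀ s ∈ TV.erase 0, D s = -(-1) ^ (e + 1) := fun s hs =>
      hDconst s (TV_sub_K (mem_of_mem_erase hs)) (ne_of_mem_erase hs)
    rw [Finset.sum_congr rfl h3, sum_const, card_erase_of_mem hzeroTV, cardTV, hD0,
      nsmul_eq_mul, Nat.cast_sub (Nat.one_le_pow _ _ (by norm_num))]
    have hqe : (q : ℤ) = 3 * 3 ^ (e - 1) := by
      rw [hq]
      push_cast
      rw [← pow_succ']
      congr 1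
      omega
    rw [hqe]
    push_cast
    ring
  -- point count
  have hN : (Nat.card {p : F × F // p.2 ^ 2 = p.1 ^ 3 - p.1 + b} : ℤ) =
      3 ^ (2 * e) + ∑ x : F, (quadraticChar F (x ^ 3 - x + b) : ℤ) := by
    rw [Nat.card_eq_fintype_card]
    have hequiv : {p : F × F // p.2 ^ 2 = p.1 ^ 3 - p.1 + b} ≃
        Σ x : F, {y : F // y ^ 2 = x ^ 3 - x + b} :=
      { toFun := fun p => ⟨p.1.1, p.1.2, p.2⟩
        invFun := fun s => ⟨(s.1, s.2.1), s.2.2⟩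
        left_inv := fun p => rfl
        right_inv := fun s => rfl }
    rw [Fintype.card_congr hequiv, Fintype.card_sigma]
    push_cast
    rw [Finset.sum_congr rfl (fun x _ => cnt (x ^ 3 - x + b))]
    rw [Finset.sum_add_distrib, sum_const, card_univ, hF]
    push_cast
    ring
  have hshift : ∑ x : F, (quadraticChar F (x ^ 3 - x + b) : ℤ) =
      ∑ x : F, (quadraticChar F (P x) : ℤ) := by
    symm
    apply Fintype.sum_bijective (fun x : F => x - c) (Equiv.subRight c).bijective
    intro x
    congr 2
    have hcube : (x - c) ^ 3 = x ^ 3 - c ^ 3 := by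
      have h := add_pow_char x (-c) 3
      have hodd : (-c : F) ^ 3 = -(c ^ 3) := by ring
      rw [hodd] at h
      rw [sub_eq_add_neg, h, ← sub_eq_add_neg]
    have hcb : c ^ 3 - c = b := (hPapp c).symm.trans hc
    rw [hPapp]
    linear_combination -hcube + hcb
  have hfib : ∑ x : F, (quadraticChar F (P x) : ℤ) = 3 * ∑ t ∈ V, (quadraticChar F t : ℤ) := by
    have hmaps : ∀ x ∈ (univ : Finset F), P x ∈ V := by
      intro x _
      exact imP ▸ mem_image_of_mem P (mem_univ x)
    have h1 := Finset.sum_fiberwise_of_maps_to hmaps (fun x => (quadraticChar F (P x) : ℤ))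
    rw [← h1, Finset.mul_sum]
    apply Finset.sum_congr rfl
    intro t ht
    have h2 : ∀ x ∈ univ.filter (fun x : F => P x = t), (quadraticChar F (P x) : ℤ)
        = (quadraticChar F t : ℤ) := by
      intro x hx
      rw [(mem_filter.mp hx).2]
    rw [Finset.sum_congr rfl h2, sum_const, nsmul_eq_mul]
    have htim : t ∈ univ.image P := by rw [imP]; exact ht
    obtain ⟨x0, -, hx0⟩ := Finset.mem_image.mp htim
    rw [← hx0, fiber_card_eq P x0, kerP]
    norm_num
  rw [hN, hshift, hfib, hC]
  have h3e : (3 : ℤ) * ((-1) ^ (e + 1) * 2 * 3 ^ (e - 1)) = (-1) ^ (e + 1) * 2 * 3 ^ e := by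
    have : e - 1 + 1 = e := by omega
    calc (3 : ℤ) * ((-1) ^ (e + 1) * 2 * 3 ^ (e - 1)) = (-1) ^ (e + 1) * 2 * (3 ^ (e - 1) * 3) := by
          ring
    _ = (-1) ^ (e + 1) * 2 * 3 ^ e := by rw [← pow_succ, this]
  rw [h3e, pow_succ]
  ring

end Main

theorem point_count_typeI_trace_zero_even
    (d : ℕ) (hd : Even d) (hd0 : d ≠ 0) (F : Type) [Field F] [Fintype F]
    [Algebra (ZMod 3) F] (hF : Fintype.card F = 3 ^ d) (b : F)
    (hb : Algebra.trace (ZMod 3) F b = 0) :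
    (Nat.card {p : F × F // p.2 ^ 2 = p.1 ^ 3 - p.1 + b} : ℤ) + 1 =
      3 ^ d + 1 - (-1) ^ (d / 2) * 2 * 3 ^ (d / 2) := by
  obtain ⟨e, rfl⟩ := hd
  have he : e ≠ 0 := by omega
  have h2e : e + e = 2 * e := by omega
  have hdiv : (e + e) / 2 = e := by omega
  rw [hdiv]
  rw [h2e] at hF ⊢
  have := main_count F e he hF b hb
  rw [this]
  ring
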